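/- For every integer j ≥ 0: f_j = φ_{1,j}(f_{j+1}), and 1 − 1/σ̲_j ≤ f_j ≤ 1 − 1/σ̄_j (with the conventions 1/∞ = 0). -/

import Mathlib

open MeasureTheory ProbabilityTheory Filter Set
open scoped ENNReal NNReal Topology Classical

noncomputable section

variable {m : ℕ → ℕ}

/-- Generating function `φ_{1,j}` of the `j`-th offspring distribution `ν1 j`. -/
def phiFn1 (m : ℕ → ℕ) (ν1 : ∀ j : ℕ, Measure (Fin (m j) → Bool)) (j : ℕ) (z : ℝ) : ℝ :=
  ∫ x, z ^ (Finset.univ.filter fun k : Fin (m j) => x k = true).card ∂ν1 j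

/-- The composition `φ_{1,j} ∘ … ∘ φ_{1,j+n}`. -/
def phiComp1 (m : ℕ → ℕ) (ν1 : ∀ j : ℕ, Measure (Fin (m j) → Bool)) : ℕ → ℕ → ℝ → ℝ
  | j, 0, z => phiFn1 m ν1 j z
  | j, n + 1, z => phiFn1 m ν1 j (phiComp1 m ν1 (j + 1) n z)

/-- The extinction probability `f_j = lim ↑ φ_{1,j} ∘ … ∘ φ_{1,j+n}(0)`. -/
def fExt1 (m : ℕ → ℕ) (ν1 : ∀ j : ℕ, Measure (Fin (m j) → Bool)) (j : ℕ) : ℝ :=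
  ⨆ n : ℕ, phiComp1 m ν1 j n 0

/-- `φ'_{1,n}(1)` as an extended nonnegative real. -/
def Dcoef1 (m : ℕ → ℕ) (ν1 : ∀ j : ℕ, Measure (Fin (m j) → Bool)) (n : ℕ) : ℝ≥0∞ :=
  ENNReal.ofReal (deriv (phiFn1 m ν1 n) 1)

/-- The quantity `σ̲_j`. -/
def sigmaLow1 (m : ℕ → ℕ) (ν1 : ∀ j : ℕ, Measure (Fin (m j) → Bool)) (j : ℕ) : ℝ≥0∞ :=
  max 1
    ((∑' n : ℕ,
        ENNReal.ofReal (deriv (phiFn1 m ν1 (j + n)) 1 + phiFn1 m ν1 (j + n) 0 - 1) /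
          (Dcoef1 m ν1 (j + n) * ∏ ℓ ∈ Finset.Icc j (j + n), Dcoef1 m ν1 ℓ)) +
      limsup (fun n : ℕ => (∏ ℓ ∈ Finset.Icc j n, Dcoef1 m ν1 ℓ)⁻¹) atTop)

/-- The quantity `σ̄_j`. -/
def sigmaHigh1 (m : ℕ → ℕ) (ν1 : ∀ j : ℕ, Measure (Fin (m j) → Bool)) (j : ℕ) : ℝ≥0∞ :=
  (∑' n : ℕ,
      ENNReal.ofReal (deriv (deriv (phiFn1 m ν1 (j + n))) 1) /
        (Dcoef1 m ν1 (j + n) * ∏ ℓ ∈ Finset.Icc j (j + n), Dcoef1 m ν1 ℓ)) +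
    liminf (fun n : ℕ => (∏ ℓ ∈ Finset.Icc j n, Dcoef1 m ν1 ℓ)⁻¹) atTop

open Finset
namespace Stmt8Aux

variable {s : ℝ}

/-- `aG s k = 1 + s + … + s^(k-1)`. -/
def aG (s : ℝ) (k : ℕ) : ℝ := ∑ i ∈ range k, s ^ i
/-- `bG s k = ∑_{i<k} aG s i`. -/
def bG (s : ℝ) (k : ℕ) : ℝ := ∑ i ∈ range k, aG s i

lemma aG_nonneg (hs0 : 0 ≤ s) (k : ℕ) : 0 ≤ aG s k :=
  Finset.sum_nonneg fun i _ => pow_nonneg hs0 i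

lemma aG_le (hs0 : 0 ≤ s) (hs1 : s ≤ 1) (k : ℕ) : aG s k ≤ k := by
  calc aG s k ≤ ∑ i ∈ range k, (1:ℝ) :=
        Finset.sum_le_sum fun i _ => pow_le_one₀ hs0 hs1
    _ = k := by simp

lemma aG_mono (hs0 : 0 ≤ s) {k l : ℕ} (h : k ≤ l) : aG s k ≤ aG s l :=
  Finset.sum_le_sum_of_subset_of_nonneg (Finset.range_subset_range.2 h)
    (fun i _ _ => pow_nonneg hs0 i)

lemma one_le_aG (hs0 : 0 ≤ s) {k : ℕ} (hk : 1 ≤ k) : 1 ≤ aG s k := by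
  have := aG_mono hs0 hk (s := s)
  simpa [aG] using this

lemma one_sub_mul_aG (k : ℕ) : (1 - s) * aG s k = 1 - s ^ k := by
  have := geom_sum_mul s k
  unfold aG; nlinarith [this]

lemma aG_zero : aG s 0 = 0 := by simp [aG]

lemma bG_nonneg (hs0 : 0 ≤ s) (k : ℕ) : 0 ≤ bG s k :=
  Finset.sum_nonneg fun i _ => aG_nonneg hs0 i

lemma sub_aG_eq (k : ℕ) : (k : ℝ) - aG s k = (1 - s) * bG s k := by
  unfold aG bG
  rw [Finset.mul_sum]
  have : (k : ℝ) - ∑ i ∈ range k, s ^ i = ∑ i ∈ range k, (1 - s ^ i) := by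
    rw [Finset.sum_sub_distrib]; simp
  rw [this]
  exact Finset.sum_congr rfl fun i _ => (one_sub_mul_aG i).symm

lemma bG_le (hs0 : 0 ≤ s) {k : ℕ} (hk : 1 ≤ k) : bG s k ≤ ((k : ℝ) - 1) * aG s k := by
  unfold bG
  rcases k with _ | k
  · omega
  rw [Finset.sum_range_succ' _ k, aG_zero]
  have h : ∑ i ∈ range k, aG s (i + 1) ≤ ∑ i ∈ range k, aG s (k + 1) :=
    Finset.sum_le_sum fun i hi => aG_mono hs0 (by simp at hi; omega)
  simp only [Finset.sum_const, Finset.card_range, nsmul_eq_mul] at h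
  push_cast
  nlinarith [h]

lemma bG_ge (hs0 : 0 ≤ s) {k : ℕ} (hk : 1 ≤ k) : (k : ℝ) - 1 ≤ bG s k := by
  unfold bG
  rcases k with _ | k
  · omega
  rw [Finset.sum_range_succ' _ k, aG_zero]
  have h : ∑ i ∈ range k, (1:ℝ) ≤ ∑ i ∈ range k, aG s (i + 1) :=
    Finset.sum_le_sum fun i hi => one_le_aG hs0 (by omega)
  simp only [Finset.sum_const, Finset.card_range, nsmul_eq_mul, mul_one] at h
  push_cast
  linarith

lemma mul_aG_le (hs0 : 0 ≤ s) (hs1 : s ≤ 1) {l k : ℕ} (hl : 1 ≤ l) (hlk : l ≤ k) :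
    (l : ℝ) * aG s k ≤ (k : ℝ) * aG s l := by
  have hsplit : aG s k = aG s l + ∑ i ∈ Finset.Ico l k, s ^ i := by
    unfold aG
    simp only [Finset.range_eq_Ico]
    exact (Finset.sum_Ico_consecutive _ (Nat.zero_le l) hlk).symm
  have hterm : ∀ i ∈ Finset.Ico l k, (l : ℝ) * s ^ i ≤ aG s l := by
    intro i hi
    simp only [Finset.mem_Ico] at hi
    have : ∀ j ∈ range l, s ^ i ≤ s ^ j := fun j hj =>
      pow_le_pow_of_le_one hs0 hs1 (by simp at hj; omega)
    calc (l:ℝ) * s ^ i = ∑ _j ∈ range l, s ^ i := by simp [mul_comm]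
      _ ≤ ∑ j ∈ range l, s ^ j := Finset.sum_le_sum this
      _ = aG s l := rfl
  have h2 : (l : ℝ) * ∑ i ∈ Finset.Ico l k, s ^ i ≤ (k - l : ℕ) * aG s l := by
    rw [Finset.mul_sum]
    calc ∑ i ∈ Finset.Ico l k, (l:ℝ) * s ^ i ≤ ∑ i ∈ Finset.Ico l k, aG s l :=
          Finset.sum_le_sum hterm
      _ = (k - l : ℕ) * aG s l := by
          rw [Finset.sum_const, Nat.card_Ico]; simp
  rw [hsplit, mul_add]
  have hc : ((k - l : ℕ) : ℝ) = (k : ℝ) - l := by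
    push_cast [Nat.cast_sub hlk]; ring
  rw [hc] at h2
  nlinarith [h2, aG_nonneg hs0 l]

lemma bG_zero : bG s 0 = 0 := by simp [bG]

lemma aux_pair (hs0 : 0 ≤ s) (hs1 : s ≤ 1) {k l : ℕ} (hlk : l ≤ k) :
    (l : ℝ) * bG s k + (k : ℝ) * bG s l ≤
      (k : ℝ) * ((k : ℝ) - 1) * aG s l + (l : ℝ) * ((l : ℝ) - 1) * aG s k := by
  rcases Nat.eq_zero_or_pos l with rfl | hl
  · simp [bG_zero, aG_zero]
  have hk : 1 ≤ k := le_trans hl hlk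
  have h1 : bG s k ≤ ((k : ℝ) - 1) * aG s k := bG_le hs0 hk
  have h2 : bG s l ≤ ((l : ℝ) - 1) * aG s l := bG_le hs0 hl
  have h3 : (l : ℝ) * aG s k ≤ (k : ℝ) * aG s l := mul_aG_le hs0 hs1 hl hlk
  have hkl' : (l : ℝ) ≤ (k : ℝ) := Nat.cast_le.2 hlk
  have h4 : ((k:ℝ) - l) * ((l:ℝ) * aG s k) ≤ ((k:ℝ) - l) * ((k:ℝ) * aG s l) :=
    mul_le_mul_of_nonneg_left h3 (by linarith)
  have h5 : (l:ℝ) * bG s k ≤ (l:ℝ) * (((k : ℝ) - 1) * aG s k) :=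
    mul_le_mul_of_nonneg_left h1 (by positivity)
  have h6 : (k:ℝ) * bG s l ≤ (k:ℝ) * (((l : ℝ) - 1) * aG s l) :=
    mul_le_mul_of_nonneg_left h2 (by positivity)
  nlinarith [h4, h5, h6]

/-- The key pairwise inequality. -/
lemma pair_ineq (hs0 : 0 ≤ s) (hs1 : s ≤ 1) (k l : ℕ) :
    (l : ℝ) * bG s k + (k : ℝ) * bG s l ≤
      (k : ℝ) * ((k : ℝ) - 1) * aG s l + (l : ℝ) * ((l : ℝ) - 1) * aG s k := by
  rcases le_total l k with hlk | hkl
  · exact aux_pair hs0 hs1 hlk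
  · have := aux_pair hs0 hs1 hkl
    linarith

section PGF

variable {ι : Type*} [Fintype ι] (w : ι → ℝ) (c : ι → ℕ)

/-- Generating function. -/
def Fg (z : ℝ) : ℝ := ∑ i, w i * z ^ c i
/-- Mean. -/
def Mg : ℝ := ∑ i, w i * (c i : ℝ)
/-- Second factorial moment. -/
def Vg : ℝ := ∑ i, w i * ((c i * (c i - 1) : ℕ) : ℝ)
/-- `A = ∑ w i * aG s (c i)`. -/
def Ag (s : ℝ) : ℝ := ∑ i, w i * aG s (c i)
/-- `B = ∑ w i * bG s (c i)`. -/
def Bg (s : ℝ) : ℝ := ∑ i, w i * bG s (c i)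

variable {w c}
variable (hw : ∀ i, 0 ≤ w i) (h1 : ∑ i, w i = 1)

section
include hw

lemma Mg_nonneg : 0 ≤ Mg w c :=
  Finset.sum_nonneg fun i _ => mul_nonneg (hw i) (Nat.cast_nonneg _)
lemma Vg_nonneg : 0 ≤ Vg w c :=
  Finset.sum_nonneg fun i _ => mul_nonneg (hw i) (Nat.cast_nonneg _)
lemma Ag_nonneg {s : ℝ} (hs0 : 0 ≤ s) : 0 ≤ Ag w c s :=
  Finset.sum_nonneg fun i _ => mul_nonneg (hw i) (aG_nonneg hs0 _)
lemma Bg_nonneg {s : ℝ} (hs0 : 0 ≤ s) : 0 ≤ Bg w c s :=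
  Finset.sum_nonneg fun i _ => mul_nonneg (hw i) (bG_nonneg hs0 _)
lemma Fg_nonneg {z : ℝ} (hz : 0 ≤ z) : 0 ≤ Fg w c z :=
  Finset.sum_nonneg fun i _ => mul_nonneg (hw i) (pow_nonneg hz _)

lemma Fg_mono {x y : ℝ} (hx : 0 ≤ x) (hxy : x ≤ y) : Fg w c x ≤ Fg w c y :=
  Finset.sum_le_sum fun i _ =>
    mul_le_mul_of_nonneg_left (pow_le_pow_left₀ hx hxy _) (hw i)

lemma Ag_le_Mg {s : ℝ} (hs0 : 0 ≤ s) (hs1 : s ≤ 1) : Ag w c s ≤ Mg w c :=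
  Finset.sum_le_sum fun i _ => mul_le_mul_of_nonneg_left (aG_le hs0 hs1 _) (hw i)

end

lemma Fg_one (h1 : ∑ i, w i = 1) : Fg w c 1 = 1 := by simp [Fg, h1]

include h1 in
lemma Fg_le_one (hw : ∀ i, 0 ≤ w i) {z : ℝ} (hz0 : 0 ≤ z) (hz1 : z ≤ 1) : Fg w c z ≤ 1 := by
  rw [← Fg_one (w := w) (c := c) h1]
  exact Fg_mono hw hz0 hz1

lemma Fg_continuous : Continuous (Fg w c) := by
  unfold Fg
  exact continuous_finset_sum _ fun i _ => continuous_const.mul (continuous_pow _)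

include h1 in
lemma one_sub_Fg {s : ℝ} : 1 - Fg w c s = (1 - s) * Ag w c s := by
  unfold Fg Ag
  rw [Finset.mul_sum]
  nth_rewrite 1 [show (1 : ℝ) = ∑ i, w i from h1.symm]
  rw [← Finset.sum_sub_distrib]
  refine Finset.sum_congr rfl fun i _ => ?_
  linear_combination (- w i) * (one_sub_mul_aG (s := s) (c i))

lemma Mg_sub_Ag {s : ℝ} : Mg w c - Ag w c s = (1 - s) * Bg w c s := by
  unfold Mg Ag Bg
  rw [Finset.mul_sum, ← Finset.sum_sub_distrib]
  refine Finset.sum_congr rfl fun i _ => ?_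
  linear_combination (w i) * (sub_aG_eq (s := s) (c i))

lemma Ag_pos (hw : ∀ i, 0 ≤ w i) {s : ℝ} (hM : 0 < Mg w c) (hs0 : 0 ≤ s) : 0 < Ag w c s := by
  have : ∑ i : ι, (0:ℝ) < ∑ i, w i * (c i : ℝ) := by simpa [Mg] using hM
  obtain ⟨i, -, hi⟩ := Finset.exists_lt_of_sum_lt this
  have hwi : 0 < w i := by
    rcases (hw i).lt_or_eq with h | h
    · exact h
    · exfalso; rw [← h] at hi; simp at hi
  have hci : 1 ≤ c i := by
    by_contra h
    push_neg at h
    interval_cases h' : c i <;> simp_all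
  refine Finset.sum_pos' (fun i _ => mul_nonneg (hw i) (aG_nonneg hs0 _)) ⟨i, Finset.mem_univ i, ?_⟩
  exact mul_pos hwi (lt_of_lt_of_le one_pos (one_le_aG hs0 hci))

include h1 in
lemma Fg_lt_one (hw : ∀ i, 0 ≤ w i) {s : ℝ} (hM : 0 < Mg w c) (hs0 : 0 ≤ s) (hs1 : s < 1) :
    Fg w c s < 1 := by
  have := one_sub_Fg (w := w) (c := c) h1 (s := s)
  nlinarith [Ag_pos hw hM hs0]

include hw in
lemma key_up {s : ℝ} (hs0 : 0 ≤ s) (hs1 : s ≤ 1) :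
    Mg w c * Bg w c s ≤ Vg w c * Ag w c s := by
  have cast_lemma : ∀ k : ℕ, ((k * (k - 1) : ℕ) : ℝ) = (k : ℝ) * ((k : ℝ) - 1) := by
    intro k
    cases k with
    | zero => simp
    | succ n => push_cast [Nat.succ_sub_one]; ring
  have e1 : Mg w c * Bg w c s = ∑ i, ∑ j, (w i * c i) * (w j * bG s (c j)) :=
    Finset.sum_mul_sum _ _ _ _
  have e2 : Mg w c * Bg w c s = ∑ i, ∑ j, (w j * c j) * (w i * bG s (c i)) := by
    rw [e1]; exact Finset.sum_comm
  have e3 : Vg w c * Ag w c s = ∑ i, ∑ j, (w i * ((c i * (c i - 1) : ℕ) : ℝ)) * (w j * aG s (c j)) :=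
    Finset.sum_mul_sum _ _ _ _
  have e4 : Vg w c * Ag w c s = ∑ i, ∑ j, (w j * ((c j * (c j - 1) : ℕ) : ℝ)) * (w i * aG s (c i)) := by
    rw [e3]; exact Finset.sum_comm
  have comb : (∑ i, ∑ j, (w i * (c i : ℝ)) * (w j * bG s (c j))) +
      (∑ i, ∑ j, (w j * (c j : ℝ)) * (w i * bG s (c i))) ≤
      (∑ i, ∑ j, (w i * ((c i * (c i - 1) : ℕ) : ℝ)) * (w j * aG s (c j))) +
      (∑ i, ∑ j, (w j * ((c j * (c j - 1) : ℕ) : ℝ)) * (w i * aG s (c i))) := by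
    rw [← Finset.sum_add_distrib, ← Finset.sum_add_distrib]
    refine Finset.sum_le_sum fun i _ => ?_
    rw [← Finset.sum_add_distrib, ← Finset.sum_add_distrib]
    refine Finset.sum_le_sum fun j _ => ?_
    have hp := pair_ineq hs0 hs1 (c i) (c j)
    have hww : 0 ≤ w i * w j := mul_nonneg (hw i) (hw j)
    rw [cast_lemma, cast_lemma]
    nlinarith [hp, hww]
  linarith [comb, e1.symm, e2, e3, e4]

include hw h1 in
lemma key_lo {s : ℝ} (hs0 : 0 ≤ s) :
    Mg w c + Fg w c 0 - 1 ≤ Bg w c s := by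
  have e : ∑ i, w i * ((c i : ℝ) + (0:ℝ) ^ (c i) - 1) = Mg w c + Fg w c 0 - ∑ i, w i := by
    unfold Mg Fg
    rw [← Finset.sum_add_distrib, ← Finset.sum_sub_distrib]
    exact Finset.sum_congr rfl fun i _ => by ring
  rw [h1] at e
  rw [← e]
  refine Finset.sum_le_sum fun i _ => mul_le_mul_of_nonneg_left ?_ (hw i)
  rcases Nat.eq_zero_or_pos (c i) with h | h
  · simp [h, bG_zero]
  · rw [zero_pow (by omega)]
    have := bG_ge hs0 h
    linarith

include hw h1 in
lemma step_up {s : ℝ} (hM : 0 < Mg w c) (hs0 : 0 ≤ s) (hs1 : s < 1) :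
    (1 - Fg w c s)⁻¹ ≤ Vg w c / (Mg w c) ^ 2 + (Mg w c)⁻¹ * (1 - s)⁻¹ := by
  have hA := one_sub_Fg (w := w) (c := c) h1 (s := s)
  have hB := Mg_sub_Ag (w := w) (c := c) (s := s)
  have hApos := Ag_pos hw hM hs0
  have hkey := key_up (c := c) hw hs0 hs1.le
  have h1s : (0:ℝ) < 1 - s := by linarith
  have hrhs : Vg w c / (Mg w c) ^ 2 + (Mg w c)⁻¹ * (1 - s)⁻¹ =
      (Vg w c * (1 - s) + Mg w c) / ((Mg w c) ^ 2 * (1 - s)) := by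
    field_simp
  rw [hA, hrhs, inv_eq_one_div, div_le_div_iff₀ (by positivity) (by positivity)]
  have hkey2 : ((1-s)*(1-s)) * (Mg w c * Bg w c s) ≤ ((1-s)*(1-s)) * (Vg w c * Ag w c s) :=
    mul_le_mul_of_nonneg_left hkey (by positivity)
  have hB2 : Mg w c * (1-s) * (Mg w c - Ag w c s) = Mg w c * (1-s) * ((1-s) * Bg w c s) := by
    rw [hB]
  nlinarith [hkey2, hB2, hApos, h1s, hM]

include hw h1 in
lemma step_lo {s : ℝ} (hM : 0 < Mg w c) (hs0 : 0 ≤ s) (hs1 : s < 1) :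
    max 0 (Mg w c + Fg w c 0 - 1) / (Mg w c) ^ 2 + (Mg w c)⁻¹ * (1 - s)⁻¹ ≤
      (1 - Fg w c s)⁻¹ := by
  have hA := one_sub_Fg (w := w) (c := c) h1 (s := s)
  have hB := Mg_sub_Ag (w := w) (c := c) (s := s)
  have hApos := Ag_pos hw hM hs0
  have h1s : (0:ℝ) < 1 - s := by linarith
  set L := max 0 (Mg w c + Fg w c 0 - 1) with hLdef
  have hL0 : 0 ≤ L := le_max_left _ _
  have hLB : L ≤ Bg w c s := max_le (Bg_nonneg hw hs0) (key_lo hw h1 hs0)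
  have hAM : Ag w c s ≤ Mg w c := Ag_le_Mg hw hs0 hs1.le
  have hLA : L * Ag w c s ≤ Bg w c s * Mg w c :=
    mul_le_mul hLB hAM (Ag_nonneg hw hs0) (Bg_nonneg hw hs0)
  have hrhs : L / (Mg w c) ^ 2 + (Mg w c)⁻¹ * (1 - s)⁻¹ =
      (L * (1 - s) + Mg w c) / ((Mg w c) ^ 2 * (1 - s)) := by
    field_simp
  rw [hA, hrhs, inv_eq_one_div, div_le_div_iff₀ (by positivity) (by positivity)]
  have hLA2 : ((1-s)*(1-s)) * (L * Ag w c s) ≤ ((1-s)*(1-s)) * (Bg w c s * Mg w c) :=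
    mul_le_mul_of_nonneg_left hLA (by positivity)
  have hB2 : Mg w c * (1-s) * (Mg w c - Ag w c s) = Mg w c * (1-s) * ((1-s) * Bg w c s) := by
    rw [hB]
  nlinarith [hLA2, hB2, hApos, h1s, hM]

lemma Fg_of_Mg_zero (hw : ∀ i, 0 ≤ w i) (h1 : ∑ i, w i = 1) (hM : Mg w c = 0) (z : ℝ) :
    Fg w c z = 1 := by
  have hz : ∀ i ∈ Finset.univ, w i * (c i : ℝ) = 0 := by
    have hnn : ∀ i ∈ Finset.univ, (0:ℝ) ≤ w i * (c i : ℝ) := fun i _ =>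
      mul_nonneg (hw i) (Nat.cast_nonneg _)
    exact (Finset.sum_eq_zero_iff_of_nonneg hnn).1 hM
  have hterm : ∀ i, w i * z ^ c i = w i := by
    intro i
    rcases mul_eq_zero.1 (hz i (Finset.mem_univ i)) with h | h
    · rw [h, zero_mul]
    · have hc : c i = 0 := Nat.cast_eq_zero.1 h
      rw [hc, pow_zero, mul_one]
  unfold Fg
  rw [Finset.sum_congr rfl fun i _ => hterm i, h1]

section Deriv
variable (w : ι → ℝ) (c : ι → ℕ)

lemma hasDerivAt_Fg (z : ℝ) :
    HasDerivAt (Fg w c) (∑ i, w i * ((c i : ℝ) * z ^ (c i - 1))) z := by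
  unfold Fg
  exact HasDerivAt.fun_sum fun i _ => ((hasDerivAt_pow (c i) z).const_mul (w i))

lemma deriv_Fg (z : ℝ) : deriv (Fg w c) z = ∑ i, w i * ((c i : ℝ) * z ^ (c i - 1)) :=
  (hasDerivAt_Fg w c z).deriv

lemma deriv_Fg_one : deriv (Fg w c) 1 = Mg w c := by
  rw [deriv_Fg]; unfold Mg; simp

lemma deriv2_Fg_one : deriv (deriv (Fg w c)) 1 = Vg w c := by
  have hfun : deriv (Fg w c) = fun z => ∑ i, w i * ((c i : ℝ) * z ^ (c i - 1)) :=
    funext (deriv_Fg w c)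
  rw [hfun]
  have h2 : HasDerivAt (fun z : ℝ => ∑ i, w i * ((c i : ℝ) * z ^ (c i - 1)))
      (∑ i, w i * ((c i : ℝ) * (((c i - 1 : ℕ) : ℝ) * (1:ℝ) ^ (c i - 1 - 1)))) 1 :=
    HasDerivAt.fun_sum fun i _ =>
      (((hasDerivAt_pow (c i - 1) 1).const_mul ((c i : ℝ))).const_mul (w i))
  rw [h2.deriv]
  unfold Vg
  refine Finset.sum_congr rfl fun i _ => ?_
  rcases Nat.eq_zero_or_pos (c i) with h | h
  · simp [h]
  · rw [one_pow]
    push_cast [Nat.cast_sub h]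
    ring

end Deriv
end PGF

section Bridge
open MeasureTheory

variable (m : ℕ → ℕ) (ν1 : ∀ j : ℕ, Measure (Fin (m j) → Bool))

/-- Weights of the offspring distribution. -/
def Wm (n : ℕ) (x : Fin (m n) → Bool) : ℝ := ((ν1 n) {x}).toReal
/-- Number of successes. -/
def Cm (n : ℕ) (x : Fin (m n) → Bool) : ℕ := (Finset.univ.filter fun k => x k = true).card

lemma Wm_nonneg (n : ℕ) (x : Fin (m n) → Bool) : 0 ≤ Wm m ν1 n x := ENNReal.toReal_nonneg

lemma Wm_sum (hν : ∀ j, IsProbabilityMeasure (ν1 j)) (n : ℕ) : ∑ x, Wm m ν1 n x = 1 := by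
  haveI := hν n
  unfold Wm
  rw [← ENNReal.toReal_sum fun _ _ => measure_ne_top _ _]
  have h : ∑ x : Fin (m n) → Bool, (ν1 n) {x} = (ν1 n) Set.univ := by
    rw [← measure_biUnion_finset _ (fun _ _ => measurableSet_singleton _)]
    · congr 1
      ext x
      simp only [Finset.mem_univ, Set.mem_iUnion, Set.mem_singleton_iff, Set.mem_univ, iff_true]
      exact ⟨x, trivial, rfl⟩
    · intro x _ y _ hxy
      simp only [Function.onFun, Set.disjoint_singleton, ne_eq]
      exact hxy
  rw [h, measure_univ, ENNReal.toReal_one]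

lemma phi_eq (hν : ∀ j, IsProbabilityMeasure (ν1 j)) (n : ℕ) (z : ℝ) :
    phiFn1 m ν1 n z = Fg (Wm m ν1 n) (Cm m n) z := by
  haveI := hν n
  unfold phiFn1 Fg Wm Cm
  rw [integral_fintype]
  simp only [smul_eq_mul, Measure.real]
  exact Integrable.of_finite

end Bridge

lemma inv_mul_div (a x y : ℝ≥0∞) (ha : a ≠ ⊤) (hy : y ≠ ⊤) :
    a⁻¹ * (x / y) = x / (a * y) := by
  rw [div_eq_mul_inv, div_eq_mul_inv, ENNReal.mul_inv (Or.inr hy) (Or.inl ha)]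
  ring

lemma liminf_const_add (a : ℝ≥0∞) (u : ℕ → ℝ≥0∞) :
    Filter.liminf (fun n => a + u n) Filter.atTop = a + Filter.liminf u Filter.atTop := by
  rw [Filter.liminf_eq_iSup_iInf_of_nat, Filter.liminf_eq_iSup_iInf_of_nat,
    ENNReal.add_iSup]
  congr 1
  funext n
  rw [ENNReal.add_iInf]
  congr 1
  funext i
  rw [ENNReal.add_iInf]

lemma limsup_const_add (a : ℝ≥0∞) (u : ℕ → ℝ≥0∞) :
    Filter.limsup (fun n => a + u n) Filter.atTop = a + Filter.limsup u Filter.atTop := by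
  rw [Filter.limsup_eq_iInf_iSup_of_nat, Filter.limsup_eq_iInf_iSup_of_nat,
    ENNReal.add_iInf]
  congr 1
  funext n
  rw [iSup_subtype', iSup_subtype']
  haveI : Nonempty {i // i ≥ n} := ⟨⟨n, le_refl n⟩⟩
  rw [ENNReal.add_iSup]

section Main
open MeasureTheory

variable (m : ℕ → ℕ) (ν1 : ∀ j : ℕ, Measure (Fin (m j) → Bool))

/-- Mean of the `n`-th offspring distribution. -/
def MQ (n : ℕ) : ℝ := Mg (Wm m ν1 n) (Cm m n)
/-- The running value of the compositions at 0. -/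
def tQ (j n : ℕ) : ℝ := phiComp1 m ν1 j n 0
/-- Product of means. -/
def PQ (j n : ℕ) : ℝ≥0∞ := ∏ ℓ ∈ Finset.Icc j n, Dcoef1 m ν1 ℓ
/-- Numerator for the upper bound. -/
def EQ (n : ℕ) : ℝ≥0∞ := ENNReal.ofReal (deriv (deriv (phiFn1 m ν1 n)) 1)
/-- Numerator for the lower bound. -/
def LQ (n : ℕ) : ℝ≥0∞ :=
  ENNReal.ofReal (deriv (phiFn1 m ν1 n) 1 + phiFn1 m ν1 n 0 - 1)

lemma tQ_succ (j n : ℕ) : tQ m ν1 j (n + 1) = phiFn1 m ν1 j (tQ m ν1 (j+1) n) := rfl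

lemma tQ_zero (j : ℕ) : tQ m ν1 j 0 = phiFn1 m ν1 j 0 := rfl

variable (hν : ∀ j, IsProbabilityMeasure (ν1 j))

include hν

lemma phi_fun_eq (n : ℕ) : phiFn1 m ν1 n = Fg (Wm m ν1 n) (Cm m n) :=
  funext (phi_eq m ν1 hν n)

lemma phi_nonneg (n : ℕ) {z : ℝ} (hz : 0 ≤ z) : 0 ≤ phiFn1 m ν1 n z := by
  rw [phi_fun_eq m ν1 hν]
  exact Fg_nonneg (Wm_nonneg m ν1 n) hz

lemma phi_le_one (n : ℕ) {z : ℝ} (hz0 : 0 ≤ z) (hz1 : z ≤ 1) : phiFn1 m ν1 n z ≤ 1 := by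
  rw [phi_fun_eq m ν1 hν]
  exact Fg_le_one (Wm_sum m ν1 hν n) (Wm_nonneg m ν1 n) hz0 hz1

lemma phi_mono (n : ℕ) {x y : ℝ} (hx : 0 ≤ x) (hxy : x ≤ y) :
    phiFn1 m ν1 n x ≤ phiFn1 m ν1 n y := by
  rw [phi_fun_eq m ν1 hν]
  exact Fg_mono (Wm_nonneg m ν1 n) hx hxy

lemma tQ_nonneg (j n : ℕ) : 0 ≤ tQ m ν1 j n := by
  induction n generalizing j with
  | zero => exact phi_nonneg m ν1 hν j le_rfl
  | succ n ih => exact phi_nonneg m ν1 hν j (ih (j+1))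

lemma tQ_le_one (j n : ℕ) : tQ m ν1 j n ≤ 1 := by
  induction n generalizing j with
  | zero => exact phi_le_one m ν1 hν j le_rfl zero_le_one
  | succ n ih => exact phi_le_one m ν1 hν j (tQ_nonneg m ν1 hν (j+1) n) (ih (j+1))

lemma tQ_mono_step (j n : ℕ) : tQ m ν1 j n ≤ tQ m ν1 j (n + 1) := by
  induction n generalizing j with
  | zero =>
    rw [tQ_zero, tQ_succ]
    exact phi_mono m ν1 hν j le_rfl (tQ_nonneg m ν1 hν (j+1) 0)
  | succ n ih =>
    rw [tQ_succ, tQ_succ]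
    exact phi_mono m ν1 hν j (tQ_nonneg m ν1 hν (j+1) n) (ih (j+1))

lemma tQ_monotone (j : ℕ) : Monotone (tQ m ν1 j) :=
  monotone_nat_of_le_succ (tQ_mono_step m ν1 hν j)

lemma tQ_bddAbove (j : ℕ) : BddAbove (Set.range (tQ m ν1 j)) := by
  refine ⟨1, ?_⟩
  rintro x ⟨n, rfl⟩
  exact tQ_le_one m ν1 hν j n

lemma tendsto_tQ (j : ℕ) : Filter.Tendsto (tQ m ν1 j) Filter.atTop (nhds (fExt1 m ν1 j)) :=
  tendsto_atTop_ciSup (tQ_monotone m ν1 hν j) (tQ_bddAbove m ν1 hν j)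

lemma fExt_nonneg (j : ℕ) : 0 ≤ fExt1 m ν1 j :=
  le_trans (tQ_nonneg m ν1 hν j 0)
    (le_ciSup (tQ_bddAbove m ν1 hν j) 0)

lemma fExt_le_one (j : ℕ) : fExt1 m ν1 j ≤ 1 :=
  ciSup_le (tQ_le_one m ν1 hν j)

lemma fExt_eq_phi (j : ℕ) : fExt1 m ν1 j = phiFn1 m ν1 j (fExt1 m ν1 (j+1)) := by
  have h2 : Filter.Tendsto (fun n => tQ m ν1 j (n + 1)) Filter.atTop (nhds (fExt1 m ν1 j)) :=
    (tendsto_tQ m ν1 hν j).comp (Filter.tendsto_add_atTop_nat 1)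
  have hcont : Continuous (phiFn1 m ν1 j) := by
    rw [phi_fun_eq m ν1 hν]
    exact Fg_continuous
  have h4 : Filter.Tendsto (fun n => phiFn1 m ν1 j (tQ m ν1 (j+1) n)) Filter.atTop
      (nhds (phiFn1 m ν1 j (fExt1 m ν1 (j+1)))) :=
    (hcont.tendsto _).comp (tendsto_tQ m ν1 hν (j+1))
  have : (fun n => tQ m ν1 j (n + 1)) = fun n => phiFn1 m ν1 j (tQ m ν1 (j+1) n) :=
    funext fun n => tQ_succ m ν1 j n
  rw [this] at h2
  exact tendsto_nhds_unique h2 h4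

lemma MQ_nonneg (n : ℕ) : 0 ≤ MQ m ν1 n := Mg_nonneg (Wm_nonneg m ν1 n)

omit hν in
lemma PQ_ne_top (j r : ℕ) : PQ m ν1 j r ≠ ⊤ := by
  unfold PQ
  exact (ENNReal.prod_lt_top fun ℓ _ => ENNReal.ofReal_lt_top).ne

omit hν in
lemma Dcoef_ne_top (n : ℕ) : Dcoef1 m ν1 n ≠ ⊤ := ENNReal.ofReal_lt_top.ne

omit hν in
lemma PQ_self (j : ℕ) : PQ m ν1 j j = Dcoef1 m ν1 j := by
  unfold PQ
  rw [Finset.Icc_self, Finset.prod_singleton]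

omit hν in
lemma PQ_split {j r : ℕ} (h : j ≤ r) :
    PQ m ν1 j r = Dcoef1 m ν1 j * PQ m ν1 (j+1) r := by
  unfold PQ
  rw [← Finset.prod_insert (by simp), Finset.Icc_add_one_left_eq_Ioc, Finset.Ioc_insert_left h]

omit hν in
lemma PQ_zero {j r k : ℕ} (hk : k ∈ Finset.Icc j r) (h : Dcoef1 m ν1 k = 0) :
    PQ m ν1 j r = 0 := Finset.prod_eq_zero hk h

lemma deriv_phi_one (n : ℕ) : deriv (phiFn1 m ν1 n) 1 = MQ m ν1 n := by
  rw [phi_fun_eq m ν1 hν]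
  exact deriv_Fg_one _ _

lemma Dcoef_eq (n : ℕ) : Dcoef1 m ν1 n = ENNReal.ofReal (MQ m ν1 n) := by
  unfold Dcoef1
  rw [deriv_phi_one m ν1 hν]

lemma Dcoef_eq_zero (n : ℕ) (h : MQ m ν1 n = 0) : Dcoef1 m ν1 n = 0 := by
  rw [Dcoef_eq m ν1 hν, h, ENNReal.ofReal_zero]

lemma EQ_eq (n : ℕ) : EQ m ν1 n = ENNReal.ofReal (Vg (Wm m ν1 n) (Cm m n)) := by
  unfold EQ
  rw [phi_fun_eq m ν1 hν, deriv2_Fg_one]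

lemma LQ_eq (n : ℕ) :
    LQ m ν1 n = ENNReal.ofReal (max 0 (MQ m ν1 n + Fg (Wm m ν1 n) (Cm m n) 0 - 1)) := by
  unfold LQ
  rw [phi_fun_eq m ν1 hν, deriv_Fg_one]
  unfold MQ
  rcases le_total (Mg (Wm m ν1 n) (Cm m n) + Fg (Wm m ν1 n) (Cm m n) 0 - 1) 0 with h | h
  · rw [ENNReal.ofReal_of_nonpos h, max_eq_left h, ENNReal.ofReal_zero]
  · rw [max_eq_right h]

lemma phi_one_of_MQ_zero (n : ℕ) (h : MQ m ν1 n = 0) (z : ℝ) : phiFn1 m ν1 n z = 1 := by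
  rw [phi_fun_eq m ν1 hν]
  exact Fg_of_Mg_zero (Wm_nonneg m ν1 n) (Wm_sum m ν1 hν n) h z

lemma phi_one (n : ℕ) : phiFn1 m ν1 n 1 = 1 := by
  rw [phi_fun_eq m ν1 hν]
  exact Fg_one (Wm_sum m ν1 hν n)

lemma phi_lt_one (n : ℕ) {s : ℝ} (hM : 0 < MQ m ν1 n) (hs0 : 0 ≤ s) (hs1 : s < 1) :
    phiFn1 m ν1 n s < 1 := by
  rw [phi_fun_eq m ν1 hν]
  exact Fg_lt_one (Wm_sum m ν1 hν n) (Wm_nonneg m ν1 n) hM hs0 hs1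

lemma tQ_eq_one_of_deg :
    ∀ n j, (∃ k ∈ Finset.Icc j (j+n), MQ m ν1 k = 0) → tQ m ν1 j n = 1 := by
  intro n
  induction n with
  | zero =>
    intro j ⟨k, hk, h0⟩
    have : k = j := by simp at hk; omega
    subst this
    rw [tQ_zero]
    exact phi_one_of_MQ_zero m ν1 hν k h0 0
  | succ n ih =>
    intro j ⟨k, hk, h0⟩
    rw [tQ_succ]
    rcases eq_or_ne k j with rfl | hne
    · exact phi_one_of_MQ_zero m ν1 hν k h0 _
    · have hk' : k ∈ Finset.Icc (j+1) ((j+1)+n) := by simp at hk ⊢; omega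
      rw [ih (j+1) ⟨k, hk', h0⟩]
      exact phi_one m ν1 hν j

lemma tQ_lt_one :
    ∀ n j, (∀ k ∈ Finset.Icc j (j+n), 0 < MQ m ν1 k) → tQ m ν1 j n < 1 := by
  intro n
  induction n with
  | zero =>
    intro j h
    rw [tQ_zero]
    exact phi_lt_one m ν1 hν j (h j (by simp)) le_rfl one_pos
  | succ n ih =>
    intro j h
    rw [tQ_succ]
    have h1 : tQ m ν1 (j+1) n < 1 := ih (j+1) fun k hk => h k (by simp at hk ⊢; omega)
    exact phi_lt_one m ν1 hν j (h j (by simp)) (tQ_nonneg m ν1 hν (j+1) n) h1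

lemma step_up_E (j : ℕ) {s : ℝ} (hM : 0 < MQ m ν1 j) (hs0 : 0 ≤ s) (hs1 : s < 1) :
    (ENNReal.ofReal (1 - phiFn1 m ν1 j s))⁻¹ ≤
      EQ m ν1 j / (Dcoef1 m ν1 j * Dcoef1 m ν1 j) +
        (Dcoef1 m ν1 j)⁻¹ * (ENNReal.ofReal (1 - s))⁻¹ := by
  have hw := Wm_nonneg m ν1 j
  have h1 := Wm_sum m ν1 hν j
  set w := Wm m ν1 j
  set c := Cm m j
  have hreal := step_up (w := w) (c := c) hw h1 hM hs0 hs1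
  have hFs1 : Fg w c s < 1 := Fg_lt_one h1 hw hM hs0 hs1
  have hV : 0 ≤ Vg w c := Vg_nonneg hw
  have h1s : (0:ℝ) < 1 - s := by linarith
  rw [phi_fun_eq m ν1 hν, EQ_eq m ν1 hν, Dcoef_eq m ν1 hν]
  calc (ENNReal.ofReal (1 - Fg w c s))⁻¹
      = ENNReal.ofReal ((1 - Fg w c s)⁻¹) :=
        (ENNReal.ofReal_inv_of_pos (by linarith)).symm
    _ ≤ ENNReal.ofReal (Vg w c / (MQ m ν1 j) ^ 2 + (MQ m ν1 j)⁻¹ * (1 - s)⁻¹) :=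
        ENNReal.ofReal_le_ofReal hreal
    _ = ENNReal.ofReal (Vg w c / (MQ m ν1 j) ^ 2) +
        ENNReal.ofReal ((MQ m ν1 j)⁻¹ * (1 - s)⁻¹) := by
        rw [ENNReal.ofReal_add (by positivity) (by positivity)]
    _ = ENNReal.ofReal (Vg w c) /
          (ENNReal.ofReal (MQ m ν1 j) * ENNReal.ofReal (MQ m ν1 j)) +
        (ENNReal.ofReal (MQ m ν1 j))⁻¹ * (ENNReal.ofReal (1 - s))⁻¹ := by
        rw [ENNReal.ofReal_div_of_pos (by positivity), sq,
          ENNReal.ofReal_mul hM.le,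
          ENNReal.ofReal_mul (by positivity),
          ENNReal.ofReal_inv_of_pos hM, ENNReal.ofReal_inv_of_pos h1s]

lemma step_lo_E (j : ℕ) {s : ℝ} (hM : 0 < MQ m ν1 j) (hs0 : 0 ≤ s) (hs1 : s < 1) :
    LQ m ν1 j / (Dcoef1 m ν1 j * Dcoef1 m ν1 j) +
        (Dcoef1 m ν1 j)⁻¹ * (ENNReal.ofReal (1 - s))⁻¹ ≤
      (ENNReal.ofReal (1 - phiFn1 m ν1 j s))⁻¹ := by
  have hw := Wm_nonneg m ν1 j
  have h1 := Wm_sum m ν1 hν j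
  set w := Wm m ν1 j
  set c := Cm m j
  have hreal := step_lo (w := w) (c := c) hw h1 hM hs0 hs1
  have hFs1 : Fg w c s < 1 := Fg_lt_one h1 hw hM hs0 hs1
  have h1s : (0:ℝ) < 1 - s := by linarith
  have hmax : (0:ℝ) ≤ max 0 (MQ m ν1 j + Fg w c 0 - 1) := le_max_left _ _
  rw [phi_fun_eq m ν1 hν, LQ_eq m ν1 hν, Dcoef_eq m ν1 hν]
  calc ENNReal.ofReal (max 0 (MQ m ν1 j + Fg w c 0 - 1)) /
          (ENNReal.ofReal (MQ m ν1 j) * ENNReal.ofReal (MQ m ν1 j)) +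
        (ENNReal.ofReal (MQ m ν1 j))⁻¹ * (ENNReal.ofReal (1 - s))⁻¹
      = ENNReal.ofReal (max 0 (MQ m ν1 j + Fg w c 0 - 1) / (MQ m ν1 j) ^ 2 +
          (MQ m ν1 j)⁻¹ * (1 - s)⁻¹) := by
        rw [ENNReal.ofReal_add (by positivity) (by positivity),
          ENNReal.ofReal_div_of_pos (by positivity), sq,
          ENNReal.ofReal_mul hM.le,
          ENNReal.ofReal_mul (by positivity),
          ENNReal.ofReal_inv_of_pos hM, ENNReal.ofReal_inv_of_pos h1s]
    _ ≤ ENNReal.ofReal ((1 - Fg w c s)⁻¹) := ENNReal.ofReal_le_ofReal hreal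
    _ = (ENNReal.ofReal (1 - Fg w c s))⁻¹ :=
        ENNReal.ofReal_inv_of_pos (by linarith)

omit hν in
lemma assemble (X : ℕ → ℝ≥0∞) (j n : ℕ) :
    (∑ k ∈ Finset.range (n+2), X (j+k) / (Dcoef1 m ν1 (j+k) * PQ m ν1 j (j+k))) +
        (PQ m ν1 j (j+(n+1)))⁻¹ =
      X j / (Dcoef1 m ν1 j * Dcoef1 m ν1 j) +
        (Dcoef1 m ν1 j)⁻¹ *
          ((∑ k ∈ Finset.range (n+1),
              X ((j+1)+k) / (Dcoef1 m ν1 ((j+1)+k) * PQ m ν1 (j+1) ((j+1)+k))) +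
            (PQ m ν1 (j+1) ((j+1)+n))⁻¹) := by
  have hsplit : ∀ k : ℕ,
      (Dcoef1 m ν1 j)⁻¹ *
        (X ((j+1)+k) / (Dcoef1 m ν1 ((j+1)+k) * PQ m ν1 (j+1) ((j+1)+k)))
      = X (j+(k+1)) / (Dcoef1 m ν1 (j+(k+1)) * PQ m ν1 j (j+(k+1))) := by
    intro k
    rw [inv_mul_div _ _ _ (Dcoef_ne_top m ν1 j)
      (ENNReal.mul_ne_top (Dcoef_ne_top m ν1 _) (PQ_ne_top m ν1 _ _))]
    rw [show j + (k+1) = (j+1)+k from by omega]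
    rw [PQ_split m ν1 (by omega : j ≤ (j+1)+k)]
    congr 1
    ring
  have hlast : (Dcoef1 m ν1 j)⁻¹ * (PQ m ν1 (j+1) ((j+1)+n))⁻¹ =
      (PQ m ν1 j (j+(n+1)))⁻¹ := by
    rw [← ENNReal.mul_inv (Or.inr (PQ_ne_top m ν1 _ _)) (Or.inl (Dcoef_ne_top m ν1 _))]
    rw [← PQ_split m ν1 (by omega : j ≤ (j+1)+n)]
    rw [show (j+1)+n = j+(n+1) from by omega]
  rw [mul_add, Finset.mul_sum]
  simp only [hsplit, hlast]
  rw [Finset.sum_range_succ'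
    (fun k => X (j+k) / (Dcoef1 m ν1 (j+k) * PQ m ν1 j (j+k))) (n+1)]
  simp only [Nat.add_zero, PQ_self]
  abel

lemma upper_ind : ∀ n j, (ENNReal.ofReal (1 - tQ m ν1 j n))⁻¹ ≤
    (∑ k ∈ Finset.range (n+1),
        EQ m ν1 (j+k) / (Dcoef1 m ν1 (j+k) * PQ m ν1 j (j+k))) +
      (PQ m ν1 j (j+n))⁻¹ := by
  intro n
  induction n with
  | zero =>
    intro j
    by_cases hM : MQ m ν1 j = 0
    · have h0 : PQ m ν1 j j = 0 :=
        PQ_zero m ν1 (by simp) (Dcoef_eq_zero m ν1 hν j hM)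
      simp [h0]
    · have hMpos : 0 < MQ m ν1 j := (MQ_nonneg m ν1 hν j).lt_of_ne (Ne.symm hM)
      have hstep := step_up_E m ν1 hν j hMpos le_rfl one_pos
      rw [tQ_zero]
      refine hstep.trans (le_of_eq ?_)
      rw [Finset.sum_range_one]
      simp only [Nat.add_zero]
      rw [PQ_self, sub_zero, ENNReal.ofReal_one, inv_one, mul_one]
  | succ n ih =>
    intro j
    by_cases hdeg : ∀ k ∈ Finset.Icc j (j+(n+1)), 0 < MQ m ν1 k
    · have hMj : 0 < MQ m ν1 j := hdeg j (by simp)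
      have hs1 : tQ m ν1 (j+1) n < 1 :=
        tQ_lt_one m ν1 hν n (j+1) fun k hk => hdeg k (by simp at hk ⊢; omega)
      have hs0 := tQ_nonneg m ν1 hν (j+1) n
      rw [tQ_succ]
      refine (step_up_E m ν1 hν j hMj hs0 hs1).trans ?_
      rw [assemble m ν1 (EQ m ν1) j n]
      exact add_le_add_right (mul_le_mul_right (ih (j+1)) _) _
    · push_neg at hdeg
      obtain ⟨k, hk, hk0⟩ := hdeg
      have hMk : MQ m ν1 k = 0 := le_antisymm hk0 (MQ_nonneg m ν1 hν k)
      have h0 : PQ m ν1 j (j+(n+1)) = 0 :=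
        PQ_zero m ν1 hk (Dcoef_eq_zero m ν1 hν k hMk)
      simp [h0]

lemma lower_ind : ∀ n j,
    (∑ k ∈ Finset.range (n+1),
        LQ m ν1 (j+k) / (Dcoef1 m ν1 (j+k) * PQ m ν1 j (j+k))) +
      (PQ m ν1 j (j+n))⁻¹ ≤ (ENNReal.ofReal (1 - tQ m ν1 j n))⁻¹ := by
  intro n
  induction n with
  | zero =>
    intro j
    by_cases hM : MQ m ν1 j = 0
    · have h1 : tQ m ν1 j 0 = 1 :=
        tQ_eq_one_of_deg m ν1 hν 0 j ⟨j, by simp, hM⟩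
      rw [h1]
      simp
    · have hMpos : 0 < MQ m ν1 j := (MQ_nonneg m ν1 hν j).lt_of_ne (Ne.symm hM)
      have hstep := step_lo_E m ν1 hν j hMpos le_rfl one_pos
      rw [tQ_zero]
      refine le_trans (le_of_eq ?_) hstep
      rw [Finset.sum_range_one]
      simp only [Nat.add_zero]
      rw [PQ_self, sub_zero, ENNReal.ofReal_one, inv_one, mul_one]
  | succ n ih =>
    intro j
    by_cases hdeg : ∀ k ∈ Finset.Icc j (j+(n+1)), 0 < MQ m ν1 k
    · have hMj : 0 < MQ m ν1 j := hdeg j (by simp)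
      have hs1 : tQ m ν1 (j+1) n < 1 :=
        tQ_lt_one m ν1 hν n (j+1) fun k hk => hdeg k (by simp at hk ⊢; omega)
      have hs0 := tQ_nonneg m ν1 hν (j+1) n
      rw [tQ_succ]
      refine le_trans ?_ (step_lo_E m ν1 hν j hMj hs0 hs1)
      rw [assemble m ν1 (LQ m ν1) j n]
      exact add_le_add_right (mul_le_mul_right (ih (j+1)) _) _
    · push_neg at hdeg
      obtain ⟨k, hk, hk0⟩ := hdeg
      have hMk : MQ m ν1 k = 0 := le_antisymm hk0 (MQ_nonneg m ν1 hν k)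
      have h1 : tQ m ν1 j (n+1) = 1 :=
        tQ_eq_one_of_deg m ν1 hν (n+1) j ⟨k, hk, hMk⟩
      rw [h1]
      simp

lemma tendsto_G (j : ℕ) :
    Filter.Tendsto (fun n => (ENNReal.ofReal (1 - tQ m ν1 j n))⁻¹) Filter.atTop
      (nhds ((ENNReal.ofReal (1 - fExt1 m ν1 j))⁻¹)) := by
  have h1 : Continuous (fun x : ℝ => (ENNReal.ofReal (1 - x))⁻¹) :=
    continuous_inv.comp (ENNReal.continuous_ofReal.comp (continuous_const.sub continuous_id))
  exact (h1.tendsto _).comp (tendsto_tQ m ν1 hν j)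

omit hν in
lemma PQ_shift_liminf (j : ℕ) :
    Filter.liminf (fun n => (PQ m ν1 j (j+n))⁻¹) Filter.atTop =
      Filter.liminf (fun n => (PQ m ν1 j n)⁻¹) Filter.atTop := by
  have h : (fun n => (PQ m ν1 j (j+n))⁻¹) = fun n => (PQ m ν1 j (n+j))⁻¹ := by
    funext n; rw [Nat.add_comm]
  rw [h]
  exact Filter.liminf_nat_add (fun n => (PQ m ν1 j n)⁻¹) j

omit hν in
lemma PQ_shift_limsup (j : ℕ) :
    Filter.limsup (fun n => (PQ m ν1 j (j+n))⁻¹) Filter.atTop =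
      Filter.limsup (fun n => (PQ m ν1 j n)⁻¹) Filter.atTop := by
  have h : (fun n => (PQ m ν1 j (j+n))⁻¹) = fun n => (PQ m ν1 j (n+j))⁻¹ := by
    funext n; rw [Nat.add_comm]
  rw [h]
  exact Filter.limsup_nat_add (fun n => (PQ m ν1 j n)⁻¹) j

lemma upper_main (j : ℕ) :
    (ENNReal.ofReal (1 - fExt1 m ν1 j))⁻¹ ≤ sigmaHigh1 m ν1 j := by
  set S := ∑' (n:ℕ), EQ m ν1 (j+n) / (Dcoef1 m ν1 (j+n) * PQ m ν1 j (j+n)) with hS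
  have hpt : ∀ n, (ENNReal.ofReal (1 - tQ m ν1 j n))⁻¹ ≤ S + (PQ m ν1 j (j+n))⁻¹ := by
    intro n
    refine (upper_ind m ν1 hν n j).trans (add_le_add_left ?_ _)
    exact ENNReal.sum_le_tsum (Finset.range (n+1))
  have hlim := (tendsto_G m ν1 hν j).liminf_eq
  have hmono : Filter.liminf (fun n => (ENNReal.ofReal (1 - tQ m ν1 j n))⁻¹) Filter.atTop ≤
      Filter.liminf (fun n => S + (PQ m ν1 j (j+n))⁻¹) Filter.atTop :=
    Filter.liminf_le_liminf (Filter.Eventually.of_forall hpt)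
  rw [hlim, liminf_const_add, PQ_shift_liminf] at hmono
  exact hmono

lemma lower_main (j : ℕ) :
    sigmaLow1 m ν1 j ≤ (ENNReal.ofReal (1 - fExt1 m ν1 j))⁻¹ := by
  have hC := (tendsto_G m ν1 hν j).limsup_eq
  apply max_le
  · refine ENNReal.one_le_inv.2 (ENNReal.ofReal_le_one.2 ?_)
    linarith [fExt_nonneg m ν1 hν j]
  · set L := Filter.limsup (fun n : ℕ => (PQ m ν1 j n)⁻¹) Filter.atTop with hL
    have hbound : ∀ N : ℕ,
        (∑ k ∈ Finset.range N,
          LQ m ν1 (j+k) / (Dcoef1 m ν1 (j+k) * PQ m ν1 j (j+k))) + L ≤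
          (ENNReal.ofReal (1 - fExt1 m ν1 j))⁻¹ := by
      intro N
      have hev : ∀ᶠ n in Filter.atTop,
          (∑ k ∈ Finset.range N,
            LQ m ν1 (j+k) / (Dcoef1 m ν1 (j+k) * PQ m ν1 j (j+k))) + (PQ m ν1 j (j+n))⁻¹ ≤
          (ENNReal.ofReal (1 - tQ m ν1 j n))⁻¹ := by
        filter_upwards [Filter.eventually_ge_atTop N] with n hn
        refine le_trans (add_le_add_left (Finset.sum_le_sum_of_subset ?_) _)
          (lower_ind m ν1 hν n j)
        exact Finset.range_subset_range.2 (by omega)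
      have hls := Filter.limsup_le_limsup hev
      rw [hC, limsup_const_add, PQ_shift_limsup] at hls
      exact hls
    have htsum : (∑' (n:ℕ),
        LQ m ν1 (j+n) / (Dcoef1 m ν1 (j+n) * PQ m ν1 j (j+n))) + L ≤
        (ENNReal.ofReal (1 - fExt1 m ν1 j))⁻¹ := by
      rw [ENNReal.tsum_eq_iSup_nat, ENNReal.iSup_add]
      exact iSup_le hbound
    exact htsum

end Main
end Stmt8Aux

theorem stmt8
    (m : ℕ → ℕ) (ν1 : ∀ j : ℕ, Measure (Fin (m j) → Bool))
    (hm : ∀ j, 2 ≤ m j) (hν : ∀ j, IsProbabilityMeasure (ν1 j)) (j : ℕ) :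
    fExt1 m ν1 j = phiFn1 m ν1 j (fExt1 m ν1 (j + 1)) ∧
    1 - ((sigmaLow1 m ν1 j)⁻¹).toReal ≤ fExt1 m ν1 j ∧
    fExt1 m ν1 j ≤ 1 - ((sigmaHigh1 m ν1 j)⁻¹).toReal := by
  have hf0 := Stmt8Aux.fExt_nonneg m ν1 hν j
  have hf1 := Stmt8Aux.fExt_le_one m ν1 hν j
  refine ⟨Stmt8Aux.fExt_eq_phi m ν1 hν j, ?_, ?_⟩
  · have h := Stmt8Aux.lower_main m ν1 hν j
    have h2 : ENNReal.ofReal (1 - fExt1 m ν1 j) ≤ (sigmaLow1 m ν1 j)⁻¹ := by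
      have h' := ENNReal.inv_le_inv.2 h
      rwa [inv_inv] at h'
    have hfin : (sigmaLow1 m ν1 j)⁻¹ ≠ ⊤ := by
      have h1 : (1:ℝ≥0∞) ≤ sigmaLow1 m ν1 j := le_max_left _ _
      exact (lt_of_le_of_lt (ENNReal.inv_le_one.2 h1) ENNReal.one_lt_top).ne
    have h3 := ENNReal.toReal_mono hfin h2
    rw [ENNReal.toReal_ofReal (by linarith)] at h3
    linarith
  · have h := Stmt8Aux.upper_main m ν1 hν j
    have h2 : (sigmaHigh1 m ν1 j)⁻¹ ≤ ENNReal.ofReal (1 - fExt1 m ν1 j) :=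
      ENNReal.inv_le_iff_inv_le.2 h
    have h3 := ENNReal.toReal_mono ENNReal.ofReal_ne_top h2
    rw [ENNReal.toReal_ofReal (by linarith)] at h3
    linarith
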